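/- arXiv:2009.00272 — 4 statements merged into one kernel-verified Lean document; each statement's English description precedes it below -/
import Mathlib

section
/- Let α ∈ ℂ, C, D ∈ M₂(ℂ), and let A ∈ M₄(ℂ) be the block matrix [[αI₂, C],[D, −αI₂]]. Then for every θ ∈ ℝ and every λ ∈ ℂ, det(λ·I₄ − Im(e^{−iθ}A)) = det((λ² − (Im(e^{−iθ}α))²)·I₂ − (1/4)·(H − 2·Re(e^{−2iθ}Z))), where H = C*C + DD* and Z = D·C. Consequently the eigenvalues of Im(e^{−iθ}A) are ±√((Im(e^{−iθ}α))² + μ_j/4), j = 1,2, where μ₁, μ₂ are the eigenvalues of H − 2·Re(e^{−2iθ}Z). -/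
open Matrix

noncomputable section

/-- The numerical range of an `n × n` complex matrix:
`W(M) = {⟨Mx, x⟩ : ‖x‖ = 1}` with the standard inner product on `ℂⁿ`. -/
def nrange {n : ℕ} (M : Matrix (Fin n) (Fin n) ℂ) : Set ℂ :=
  {z | ∃ x : Fin n → ℂ, (∑ i, ‖x i‖ ^ 2 = 1) ∧
    (∑ i, M.mulVec x i * (starRingEnd ℂ) (x i)) = z}

/-- The ellipse with foci `f₁, f₂` and semi-major axis `a`. -/
def ellipseSet (f₁ f₂ : ℂ) (a : ℝ) : Set ℂ :=
  {z | ‖z - f₁‖ + ‖z - f₂‖ = 2 * a}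

/-- `S` is bi-elliptical: the convex hull of the union of two nondegenerate
ellipses with distinct centers. -/
def IsBiElliptical (S : Set ℂ) : Prop :=
  ∃ (f₁ f₂ g₁ g₂ : ℂ) (a a' : ℝ), 0 < a ∧ 0 < a' ∧
    ‖f₁ - f₂‖ < 2 * a ∧ ‖g₁ - g₂‖ < 2 * a' ∧
    (f₁ + f₂) / 2 ≠ (g₁ + g₂) / 2 ∧
    S = convexHull ℝ (ellipseSet f₁ f₂ a ∪ ellipseSet g₁ g₂ a')

/-- The imaginary part `(M - M*) / (2i)` of a square complex matrix. -/
def Mim {n : ℕ} (M : Matrix (Fin n) (Fin n) ℂ) : Matrix (Fin n) (Fin n) ℂ :=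
  (2 * Complex.I)⁻¹ • (M - Mᴴ)

/-- The real part `(M + M*) / 2` of a square complex matrix. -/
def Mre {n : ℕ} (M : Matrix (Fin n) (Fin n) ℂ) : Matrix (Fin n) (Fin n) ℂ :=
  (2 : ℂ)⁻¹ • (M + Mᴴ)

/-- The block matrix `[[α I₂, C], [D, -α I₂]]` as a `4 × 4` matrix. -/
def blockA (α : ℂ) (C D : Matrix (Fin 2) (Fin 2) ℂ) : Matrix (Fin 4) (Fin 4) ℂ :=
  !![α, 0, C 0 0, C 0 1;
     0, α, C 1 0, C 1 1;
     D 0 0, D 0 1, -α, 0;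
     D 1 0, D 1 1, 0, -α]

set_option maxHeartbeats 1000000 in
theorem my_det_fin_four (M : Matrix (Fin 4) (Fin 4) ℂ) :
    M.det =
      M 0 0 * (M 1 1 * (M 2 2 * M 3 3 - M 2 3 * M 3 2)
        - M 1 2 * (M 2 1 * M 3 3 - M 2 3 * M 3 1)
        + M 1 3 * (M 2 1 * M 3 2 - M 2 2 * M 3 1))
      - M 0 1 * (M 1 0 * (M 2 2 * M 3 3 - M 2 3 * M 3 2)
        - M 1 2 * (M 2 0 * M 3 3 - M 2 3 * M 3 0)
        + M 1 3 * (M 2 0 * M 3 2 - M 2 2 * M 3 0))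
      + M 0 2 * (M 1 0 * (M 2 1 * M 3 3 - M 2 3 * M 3 1)
        - M 1 1 * (M 2 0 * M 3 3 - M 2 3 * M 3 0)
        + M 1 3 * (M 2 0 * M 3 1 - M 2 1 * M 3 0))
      - M 0 3 * (M 1 0 * (M 2 1 * M 3 2 - M 2 2 * M 3 1)
        - M 1 1 * (M 2 0 * M 3 2 - M 2 2 * M 3 0)
        + M 1 2 * (M 2 0 * M 3 1 - M 2 1 * M 3 0)) := by
  rw [Matrix.det_succ_row_zero]
  simp [Fin.sum_univ_succ, Matrix.det_fin_three, show (Fin.succ 2 : Fin 4) = 3 from rfl, show ((2 : Fin 4).succAbove 2) = 3 from by decide, show ((1 : Fin 4).succAbove 2) = 3 from by decide, show ((3 : Fin 4).succAbove 2) = 2 from by decide, show (Fin.castSucc 2 : Fin 4) = 2 from by decide]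
  ring

set_option maxHeartbeats 1000000 in
theorem key (lam b x00 x01 x10 x11 y00 y01 y10 y11 : ℂ) :
    (!![lam - b, 0, -x00, -x01;
        0, lam - b, -x10, -x11;
        -y00, -y01, lam + b, 0;
        -y10, -y11, 0, lam + b] : Matrix (Fin 4) (Fin 4) ℂ).det
    = ((lam ^ 2 - b ^ 2) - (y00 * x00 + y01 * x10))
        * ((lam ^ 2 - b ^ 2) - (y10 * x01 + y11 * x11))
      - (-(y00 * x01 + y01 * x11)) * (-(y10 * x00 + y11 * x10)) := by
  rw [my_det_fin_four]
  simp [Matrix.cons_val]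
  ring

set_option maxHeartbeats 2000000 in
theorem part1 (α : ℂ) (C D : Matrix (Fin 2) (Fin 2) ℂ) (θ : ℝ) (lam : ℂ)
    (H Z : Matrix (Fin 2) (Fin 2) ℂ) (hH : H = Cᴴ * C + D * Dᴴ) (hZ : Z = D * C) :
    (lam • (1 : Matrix (Fin 4) (Fin 4) ℂ)
        - Mim (Complex.exp (-(θ : ℂ) * Complex.I) • blockA α C D)).det
      = ((lam ^ 2 - (((Complex.exp (-(θ : ℂ) * Complex.I) * α).im : ℂ)) ^ 2)
            • (1 : Matrix (Fin 2) (Fin 2) ℂ)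
          - (4 : ℂ)⁻¹ • (H - (2 : ℂ) • Mre (Complex.exp (-(2 * θ : ℂ) * Complex.I) • Z))).det := by
  subst hH hZ
  set u := Complex.exp (-(θ : ℂ) * Complex.I) with hu_def
  have h2 : Complex.exp (-(2 * θ : ℂ) * Complex.I) = u ^ 2 := by
    rw [hu_def, ← Complex.exp_nat_mul]; congr 1; push_cast; ring
  have hconj : (starRingEnd ℂ) u = u⁻¹ := by
    rw [hu_def, ← Complex.exp_conj, ← Complex.exp_neg]
    congr 1
    simp [Complex.conj_I]
  have hu : u ≠ 0 := Complex.exp_ne_zero _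
  have hI : Complex.I ≠ 0 := Complex.I_ne_zero
  have h2I : ((2 : ℂ) * Complex.I)⁻¹ = -(Complex.I) / 2 := by
    rw [mul_inv, Complex.inv_I]; ring
  have hb : ((u * α).im : ℂ) = (u * α - u⁻¹ * (starRingEnd ℂ) α) / (2 * Complex.I) := by
    rw [Complex.im_eq_sub_conj, _root_.map_mul, hconj]
  have hM : lam • (1 : Matrix (Fin 4) (Fin 4) ℂ) - Mim (u • blockA α C D)
      = !![lam - (2 * Complex.I)⁻¹ * (u * α - u⁻¹ * (starRingEnd ℂ) α), 0,
            -((2 * Complex.I)⁻¹ * (u * C 0 0 - u⁻¹ * (starRingEnd ℂ) (D 0 0))),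
            -((2 * Complex.I)⁻¹ * (u * C 0 1 - u⁻¹ * (starRingEnd ℂ) (D 1 0)));
          0, lam - (2 * Complex.I)⁻¹ * (u * α - u⁻¹ * (starRingEnd ℂ) α),
            -((2 * Complex.I)⁻¹ * (u * C 1 0 - u⁻¹ * (starRingEnd ℂ) (D 0 1))),
            -((2 * Complex.I)⁻¹ * (u * C 1 1 - u⁻¹ * (starRingEnd ℂ) (D 1 1)));
          -((2 * Complex.I)⁻¹ * (u * D 0 0 - u⁻¹ * (starRingEnd ℂ) (C 0 0))),
            -((2 * Complex.I)⁻¹ * (u * D 0 1 - u⁻¹ * (starRingEnd ℂ) (C 1 0))),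
            lam + (2 * Complex.I)⁻¹ * (u * α - u⁻¹ * (starRingEnd ℂ) α), 0;
          -((2 * Complex.I)⁻¹ * (u * D 1 0 - u⁻¹ * (starRingEnd ℂ) (C 0 1))),
            -((2 * Complex.I)⁻¹ * (u * D 1 1 - u⁻¹ * (starRingEnd ℂ) (C 1 1))),
            0, lam + (2 * Complex.I)⁻¹ * (u * α - u⁻¹ * (starRingEnd ℂ) α)] := by
    ext i j
    fin_cases i <;> fin_cases j <;>
      simp [Mim, blockA, Matrix.sub_apply, Matrix.smul_apply, Matrix.one_apply,
        Matrix.conjTranspose_apply, hconj, Complex.star_def, _root_.map_mul, star_mul',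
        smul_eq_mul] <;>
      ring
  rw [hM, key, Matrix.det_fin_two, hb]
  simp only [Matrix.sub_apply, Matrix.smul_apply, Matrix.add_apply, Matrix.one_apply,
    Matrix.conjTranspose_apply, Matrix.mul_apply, Fin.sum_univ_two, Mre,
    smul_eq_mul, _root_.map_mul, map_add, map_sub, map_pow, hconj, h2, h2I, Complex.star_def,
    show ((0:Fin 2) = (0:Fin 2)) = True from by simp,
    show ((1:Fin 2) = (1:Fin 2)) = True from by simp,
    show ((0:Fin 2) = (1:Fin 2)) = False from by simp,
    show ((1:Fin 2) = (0:Fin 2)) = False from by simp,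
    if_true, if_false, mul_one, mul_zero, sub_zero]
  have hcan : u ^ 100 * u⁻¹ ^ 100 = 1 := by
    rw [inv_pow, mul_inv_cancel₀ (pow_ne_zero _ hu)]
  congr 1 <;> [skip; skip] <;> congr 1 <;>
    (field_simp;
     ring_nf;
     simp only [inv_pow, Complex.I_sq,
       show ((-1 : ℂ))⁻¹ = -1 from by norm_num,
       show Complex.I ^ 3 = -Complex.I from by rw [pow_succ, Complex.I_sq]; ring,
       Complex.I_pow_four];
     field_simp;
     try ring;
     try (ring_nf; simp only [inv_pow]; field_simp; ring))

theorem stmt2 (α : ℂ) (C D : Matrix (Fin 2) (Fin 2) ℂ) (θ : ℝ) (lam : ℂ)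
    (H Z : Matrix (Fin 2) (Fin 2) ℂ) (hH : H = Cᴴ * C + D * Dᴴ) (hZ : Z = D * C) :
    (lam • (1 : Matrix (Fin 4) (Fin 4) ℂ)
        - Mim (Complex.exp (-(θ : ℂ) * Complex.I) • blockA α C D)).det
      = ((lam ^ 2 - (((Complex.exp (-(θ : ℂ) * Complex.I) * α).im : ℂ)) ^ 2)
            • (1 : Matrix (Fin 2) (Fin 2) ℂ)
          - (4 : ℂ)⁻¹ • (H - (2 : ℂ) • Mre (Complex.exp (-(2 * θ : ℂ) * Complex.I) • Z))).det ∧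
    ((lam • (1 : Matrix (Fin 4) (Fin 4) ℂ)
        - Mim (Complex.exp (-(θ : ℂ) * Complex.I) • blockA α C D)).det = 0 ↔
      ∃ μ : ℂ,
        (μ • (1 : Matrix (Fin 2) (Fin 2) ℂ)
            - (H - (2 : ℂ) • Mre (Complex.exp (-(2 * θ : ℂ) * Complex.I) • Z))).det = 0 ∧
        lam ^ 2 = (((Complex.exp (-(θ : ℂ) * Complex.I) * α).im : ℂ)) ^ 2 + μ / 4) := by
  have h1 := part1 α C D θ lam H Z hH hZ
  refine ⟨h1, ?_⟩
  rw [h1]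
  set β : ℂ := ((Complex.exp (-(θ : ℂ) * Complex.I) * α).im : ℂ) with hβ
  set M : Matrix (Fin 2) (Fin 2) ℂ :=
    H - (2 : ℂ) • Mre (Complex.exp (-(2 * θ : ℂ) * Complex.I) • Z) with hMdef
  have key4 : ∀ μ : ℂ, μ = 4 * (lam ^ 2 - β ^ 2) →
      μ • (1 : Matrix (Fin 2) (Fin 2) ℂ) - M
        = (4 : ℂ) • ((lam ^ 2 - β ^ 2) • (1 : Matrix (Fin 2) (Fin 2) ℂ) - (4 : ℂ)⁻¹ • M) := by
    intro μ hμ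
    rw [hμ, smul_sub, smul_smul, smul_smul]
    norm_num
  constructor
  · intro h0
    refine ⟨4 * (lam ^ 2 - β ^ 2), ?_, by ring⟩
    rw [key4 _ rfl, Matrix.det_smul, h0, mul_zero]
  · rintro ⟨μ, hdet, hlam⟩
    have hμ : μ = 4 * (lam ^ 2 - β ^ 2) := by linear_combination (-4 : ℂ) * hlam
    rw [key4 μ hμ, Matrix.det_smul] at hdet
    have h16 : ((4 : ℂ) ^ Fintype.card (Fin 2)) ≠ 0 := by norm_num
    exact (mul_eq_zero.mp hdet).resolve_left h16
end
end

section
/- Let α ∈ ℂ, let B ∈ M₂(ℂ) be not normal, and let A ∈ M₄(ℂ) be the block matrix [[αI₂, B* + I₂],[B − I₂, −αI₂]]. Let L be a ℂ-linear subspace of ℂ⁴ with A·L ⊆ L and A*·L ⊆ L. If L has nonzero intersection with span{e₁, e₂} or with span{e₃, e₄} (where e₁, e₂, e₃, e₄ is the standard basis of ℂ⁴), then L = ℂ⁴. -/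
open Matrix

noncomputable section

/-! ### Auxiliary material for `stmt12` -/

/-- A `2 × 2` complex matrix with a common eigenvector for `B` and `Bᴴ` is normal. -/
lemma key_not_normal (B : Matrix (Fin 2) (Fin 2) ℂ) (v : Fin 2 → ℂ) (hv : v ≠ 0)
    (l m : ℂ) (h1 : B.mulVec v = l • v) (h2 : Bᴴ.mulVec v = m • v) :
    B * Bᴴ = Bᴴ * B := by
  set a := v 0 with ha
  set b := v 1 with hb
  set p := B 0 0; set q := B 0 1; set r := B 1 0; set s := B 1 1
  have e1 : p * a + q * b = l * a := by
    have := congrFun h1 0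
    simpa [mulVec, dotProduct, Fin.sum_univ_two, Pi.smul_apply, smul_eq_mul] using this
  have e2 : r * a + s * b = l * b := by
    have := congrFun h1 1
    simpa [mulVec, dotProduct, Fin.sum_univ_two, Pi.smul_apply, smul_eq_mul] using this
  have e3 : star p * a + star r * b = m * a := by
    have := congrFun h2 0
    simpa [mulVec, dotProduct, Fin.sum_univ_two, conjTranspose_apply, Pi.smul_apply,
      smul_eq_mul] using this
  have e4 : star q * a + star s * b = m * b := by
    have := congrFun h2 1
    simpa [mulVec, dotProduct, Fin.sum_univ_two, conjTranspose_apply, Pi.smul_apply,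
      smul_eq_mul] using this
  have st : ∀ x y : ℂ, x = y → star x = star y := fun x y h => by rw [h]
  have e1s : star p * star a + star q * star b = star l * star a := by
    have := st _ _ e1; simpa [star_add, star_mul'] using this
  have e2s : star r * star a + star s * star b = star l * star b := by
    have := st _ _ e2; simpa [star_add, star_mul'] using this
  have e3s : p * star a + r * star b = star m * star a := by
    have := st _ _ e3; simpa [star_add, star_mul'] using this
  have e4s : q * star a + s * star b = star m * star b := by
    have := st _ _ e4; simpa [star_add, star_mul'] using this
  have hne : a * star a + b * star b ≠ 0 := by
    intro h
    apply hv
    have h' : (Complex.normSq a : ℂ) + (Complex.normSq b : ℂ) = 0 := by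
      rw [← Complex.mul_conj, ← Complex.mul_conj]; exact h
    have hh : Complex.normSq a + Complex.normSq b = 0 := by exact_mod_cast h'
    have ha0 : Complex.normSq a = 0 := by
      nlinarith [Complex.normSq_nonneg a, Complex.normSq_nonneg b]
    have hb0 : Complex.normSq b = 0 := by
      nlinarith [Complex.normSq_nonneg a, Complex.normSq_nonneg b]
    funext i
    fin_cases i
    · simpa using Complex.normSq_eq_zero.mp ha0
    · simpa using Complex.normSq_eq_zero.mp hb0
  have hml : m = star l := by
    have h0 : (l - star m) * (a * star a + b * star b) = 0 := by
      linear_combination (-(star a)) * e1 + (-(star b)) * e2 + a * e3s + b * e4s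
    rcases mul_eq_zero.mp h0 with h | h
    · have : l = star m := by linear_combination h
      rw [this, star_star]
    · exact absurd h hne
  rw [hml] at e3 e4
  rw [hml, star_star] at e3s e4s
  have g11 : q * star q = r * star r := by
    have h0 : (q * star q - r * star r) * (a * star a + b * star b) = 0 := by
      linear_combination
        (-(star a)*(star s - star l) + (star b)*(star q)) * e1
        + (-(star a)*(star r) - (star b)*(star s - star l)) * e2
        + ((star a)*(s - l) - (star b)*r) * e3
        + ((star a)*q + (star b)*(s - l)) * e4
        + (-(a)*(p - l) - a*(s - l)) * e1s
        + (a*(star p - star l) + a*(star s - star l)) * e3s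
    rcases mul_eq_zero.mp h0 with h | h
    · linear_combination h
    · exact absurd h hne
  have g12 : p * star r + q * star s = star p * q + star r * s := by
    have h0 : ((p - l) * (star r) + q * (star s - star l)
        - (star p - star l) * q - (s - l) * (star r)) * (a * star a + b * star b) = 0 := by
      linear_combination
        (-(star b)*(star p - star l)) * e1
        + (-(star b)*(star r)) * e2
        + ((star b)*(p - l)) * e3
        + ((star b)*q) * e4
        + (-(a)*q) * e1s
        + (-(a)*(s - l)) * e2s
        + (a*(star r)) * e3s
        + (a*(star s - star l)) * e4s
    rcases mul_eq_zero.mp h0 with h | h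
    · linear_combination h
    · exact absurd h hne
  have g21 : r * star p + s * star q = star q * p + star s * r := by
    have := st _ _ g12
    simp only [star_add, star_mul', star_star] at this
    linear_combination this
  ext i j
  fin_cases i <;> fin_cases j <;>
    simp only [mul_apply, Fin.sum_univ_two, conjTranspose_apply, Fin.mk_zero, Fin.mk_one,
      Fin.isValue] <;>
    [linear_combination g11; linear_combination g12; linear_combination g21;
     linear_combination -g11]

/-- Embedding `ℂ² → ℂ⁴` into the first two coordinates. -/
def emb1 (u : Fin 2 → ℂ) : Fin 4 → ℂ := ![u 0, u 1, 0, 0]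

/-- Embedding `ℂ² → ℂ⁴` into the last two coordinates. -/
def emb2 (u : Fin 2 → ℂ) : Fin 4 → ℂ := ![0, 0, u 0, u 1]

lemma emb1_add (u w : Fin 2 → ℂ) : emb1 (u + w) = emb1 u + emb1 w := by
  funext i; fin_cases i <;> simp [emb1]

lemma emb1_sub (u w : Fin 2 → ℂ) : emb1 (u - w) = emb1 u - emb1 w := by
  funext i; fin_cases i <;> simp [emb1]

lemma emb1_smul (c : ℂ) (u : Fin 2 → ℂ) : emb1 (c • u) = c • emb1 u := by
  funext i; fin_cases i <;> simp [emb1]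

lemma emb2_add (u w : Fin 2 → ℂ) : emb2 (u + w) = emb2 u + emb2 w := by
  funext i; fin_cases i <;> simp [emb2]

lemma emb2_sub (u w : Fin 2 → ℂ) : emb2 (u - w) = emb2 u - emb2 w := by
  funext i; fin_cases i <;> simp [emb2]

lemma emb2_smul (c : ℂ) (u : Fin 2 → ℂ) : emb2 (c • u) = c • emb2 u := by
  funext i; fin_cases i <;> simp [emb2]

lemma mulVec_emb1 (α : ℂ) (C D : Matrix (Fin 2) (Fin 2) ℂ) (u : Fin 2 → ℂ) :
    (blockA α C D).mulVec (emb1 u) = α • emb1 u + emb2 (D.mulVec u) := by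
  funext i; fin_cases i <;>
    simp [blockA, emb1, emb2, mulVec, dotProduct, Fin.sum_univ_four, Fin.sum_univ_two]

lemma mulVec_emb2 (α : ℂ) (C D : Matrix (Fin 2) (Fin 2) ℂ) (u : Fin 2 → ℂ) :
    (blockA α C D).mulVec (emb2 u) = emb1 (C.mulVec u) + (-α) • emb2 u := by
  funext i; fin_cases i <;>
    simp [blockA, emb1, emb2, mulVec, dotProduct, Fin.sum_univ_four, Fin.sum_univ_two] <;> ring

lemma mulVecH_emb1 (α : ℂ) (C D : Matrix (Fin 2) (Fin 2) ℂ) (u : Fin 2 → ℂ) :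
    (blockA α C D)ᴴ.mulVec (emb1 u) = star α • emb1 u + emb2 (Cᴴ.mulVec u) := by
  funext i; fin_cases i <;>
    simp [blockA, emb1, emb2, mulVec, dotProduct, Fin.sum_univ_four, Fin.sum_univ_two,
      conjTranspose_apply]

lemma mulVecH_emb2 (α : ℂ) (C D : Matrix (Fin 2) (Fin 2) ℂ) (u : Fin 2 → ℂ) :
    (blockA α C D)ᴴ.mulVec (emb2 u) = emb1 (Dᴴ.mulVec u) + (-(star α)) • emb2 u := by
  funext i; fin_cases i <;>
    simp [blockA, emb1, emb2, mulVec, dotProduct, Fin.sum_univ_four, Fin.sum_univ_two,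
      conjTranspose_apply] <;> ring

lemma eigen_of_det (v w : Fin 2 → ℂ) (hv : v ≠ 0) (h : v 0 * w 1 - v 1 * w 0 = 0) :
    ∃ l : ℂ, w = l • v := by
  by_cases h0 : v 0 = 0
  · have h1 : v 1 ≠ 0 := by
      intro h1; apply hv; funext i; fin_cases i <;> simp [h0, h1]
    refine ⟨w 1 / v 1, ?_⟩
    funext i; fin_cases i
    · have hw0 : w 0 = 0 := by
        have : v 1 * w 0 = 0 := by linear_combination -h + w 1 * h0
        rcases mul_eq_zero.mp this with h' | h'
        · exact absurd h' h1
        · exact h'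
      simp [Pi.smul_apply, smul_eq_mul, h0, hw0]
    · simp [Pi.smul_apply, smul_eq_mul]
      field_simp
  · refine ⟨w 0 / v 0, ?_⟩
    funext i; fin_cases i
    · simp [Pi.smul_apply, smul_eq_mul]
      field_simp
    · simp [Pi.smul_apply, smul_eq_mul]
      field_simp
      linear_combination h

theorem stmt12 (α : ℂ) (B : Matrix (Fin 2) (Fin 2) ℂ)
    (hB : ¬ (B * Bᴴ = Bᴴ * B))
    (L : Submodule ℂ (Fin 4 → ℂ))
    (hL : ∀ x ∈ L, (blockA α (Bᴴ + 1) (B - 1)).mulVec x ∈ L)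
    (hL' : ∀ x ∈ L, (blockA α (Bᴴ + 1) (B - 1))ᴴ.mulVec x ∈ L)
    (hint : L ⊓ Submodule.span ℂ
        {Pi.single (0 : Fin 4) (1 : ℂ), Pi.single (1 : Fin 4) (1 : ℂ)} ≠ ⊥ ∨
      L ⊓ Submodule.span ℂ
        {Pi.single (2 : Fin 4) (1 : ℂ), Pi.single (3 : Fin 4) (1 : ℂ)} ≠ ⊥) :
    L = ⊤ := by
  have two_ne : (2 : ℂ) ≠ 0 := by norm_num
  -- From emb1 u ∈ L we get emb2 u ∈ L and emb2 (Bu) ∈ L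
  have hmul1 : ∀ u : Fin 2 → ℂ, emb1 u ∈ L → emb2 u ∈ L ∧ emb2 (B.mulVec u) ∈ L := by
    intro u hu
    have h1 : emb2 ((B - 1).mulVec u) ∈ L := by
      have heq : emb2 ((B - 1).mulVec u)
          = (blockA α (Bᴴ + 1) (B - 1)).mulVec (emb1 u) - α • emb1 u := by
        rw [mulVec_emb1]; module
      rw [heq]
      exact L.sub_mem (hL _ hu) (L.smul_mem _ hu)
    have h2 : emb2 ((B + 1).mulVec u) ∈ L := by
      have heq : emb2 ((B + 1).mulVec u)
          = (blockA α (Bᴴ + 1) (B - 1))ᴴ.mulVec (emb1 u) - star α • emb1 u := by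
        rw [mulVecH_emb1]
        have hC : (Bᴴ + 1)ᴴ = B + 1 := by simp
        rw [hC]; module
      rw [heq]
      exact L.sub_mem (hL' _ hu) (L.smul_mem _ hu)
    constructor
    · have hvec : (B + 1).mulVec u - (B - 1).mulVec u = (2 : ℂ) • u := by
        funext i
        simp [add_mulVec, sub_mulVec, one_mulVec, Pi.smul_apply, smul_eq_mul]
        fin_cases i <;> simp [vecHead, vecTail] <;> ring
      have hmem : (2 : ℂ) • emb2 u ∈ L := by
        have := L.sub_mem h2 h1
        rwa [← emb2_sub, hvec, emb2_smul] at this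
      have := L.smul_mem (2 : ℂ)⁻¹ hmem
      rwa [smul_smul, inv_mul_cancel₀ two_ne, one_smul] at this
    · have hvec : (B + 1).mulVec u + (B - 1).mulVec u = (2 : ℂ) • B.mulVec u := by
        funext i
        simp [add_mulVec, sub_mulVec, one_mulVec, Pi.smul_apply, smul_eq_mul]
        fin_cases i <;> simp [vecHead, vecTail] <;> ring
      have hmem : (2 : ℂ) • emb2 (B.mulVec u) ∈ L := by
        have := L.add_mem h2 h1
        rwa [← emb2_add, hvec, emb2_smul] at this
      have := L.smul_mem (2 : ℂ)⁻¹ hmem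
      rwa [smul_smul, inv_mul_cancel₀ two_ne, one_smul] at this
  -- From emb2 u ∈ L we get emb1 u ∈ L and emb1 (Bᴴu) ∈ L
  have hmul2 : ∀ u : Fin 2 → ℂ, emb2 u ∈ L → emb1 u ∈ L ∧ emb1 (Bᴴ.mulVec u) ∈ L := by
    intro u hu
    have h1 : emb1 ((Bᴴ + 1).mulVec u) ∈ L := by
      have heq : emb1 ((Bᴴ + 1).mulVec u)
          = (blockA α (Bᴴ + 1) (B - 1)).mulVec (emb2 u) + α • emb2 u := by
        rw [mulVec_emb2]; module
      rw [heq]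
      exact L.add_mem (hL _ hu) (L.smul_mem _ hu)
    have h2 : emb1 ((Bᴴ - 1).mulVec u) ∈ L := by
      have heq : emb1 ((Bᴴ - 1).mulVec u)
          = (blockA α (Bᴴ + 1) (B - 1))ᴴ.mulVec (emb2 u) + star α • emb2 u := by
        rw [mulVecH_emb2]
        have hD : (B - 1)ᴴ = Bᴴ - 1 := by simp
        rw [hD]; module
      rw [heq]
      exact L.add_mem (hL' _ hu) (L.smul_mem _ hu)
    constructor
    · have hvec : (Bᴴ + 1).mulVec u - (Bᴴ - 1).mulVec u = (2 : ℂ) • u := by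
        funext i
        simp [add_mulVec, sub_mulVec, one_mulVec, Pi.smul_apply, smul_eq_mul]
        fin_cases i <;> simp [vecHead, vecTail] <;> ring
      have hmem : (2 : ℂ) • emb1 u ∈ L := by
        have := L.sub_mem h1 h2
        rwa [← emb1_sub, hvec, emb1_smul] at this
      have := L.smul_mem (2 : ℂ)⁻¹ hmem
      rwa [smul_smul, inv_mul_cancel₀ two_ne, one_smul] at this
    · have hvec : (Bᴴ + 1).mulVec u + (Bᴴ - 1).mulVec u = (2 : ℂ) • Bᴴ.mulVec u := by
        funext i
        simp [add_mulVec, sub_mulVec, one_mulVec, Pi.smul_apply, smul_eq_mul]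
        fin_cases i <;> simp [vecHead, vecTail] <;> ring
      have hmem : (2 : ℂ) • emb1 (Bᴴ.mulVec u) ∈ L := by
        have := L.add_mem h1 h2
        rwa [← emb1_add, hvec, emb1_smul] at this
      have := L.smul_mem (2 : ℂ)⁻¹ hmem
      rwa [smul_smul, inv_mul_cancel₀ two_ne, one_smul] at this
  -- main finishing step
  have hfin : ∀ v : Fin 2 → ℂ, v ≠ 0 → emb1 v ∈ L → L = ⊤ := by
    intro v hv0 hv1
    have hbasis : emb1 ![1, 0] ∈ L → emb1 ![0, 1] ∈ L → L = ⊤ := by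
      intro hA hB'
      have h2A : emb2 ![(1 : ℂ), 0] ∈ L := (hmul1 _ hA).1
      have h2B : emb2 ![(0 : ℂ), 1] ∈ L := (hmul1 _ hB').1
      rw [Submodule.eq_top_iff']
      intro x
      have hx : x = x 0 • emb1 ![1, 0] + x 1 • emb1 ![0, 1]
          + x 2 • emb2 ![1, 0] + x 3 • emb2 ![0, 1] := by
        funext i; fin_cases i <;> simp [emb1, emb2]
      rw [hx]
      exact L.add_mem (L.add_mem (L.add_mem (L.smul_mem _ hA) (L.smul_mem _ hB'))
        (L.smul_mem _ h2A)) (L.smul_mem _ h2B)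
    have hspan : ∀ w : Fin 2 → ℂ, emb1 w ∈ L → v 0 * w 1 - v 1 * w 0 ≠ 0 → L = ⊤ := by
      intro w hw hd
      have hd1 : w 1 * v 0 - v 1 * w 0 ≠ 0 := by rwa [mul_comm (w 1)]
      have hd2 : v 0 * w 1 - w 0 * v 1 ≠ 0 := by
        intro h0; apply hd; linear_combination h0
      apply hbasis
      · have h : (![1, 0] : Fin 2 → ℂ)
            = (w 1 / (v 0 * w 1 - v 1 * w 0)) • v + (-(v 1) / (v 0 * w 1 - v 1 * w 0)) • w := by
          funext i; fin_cases i <;>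
            (simp [Pi.smul_apply, smul_eq_mul]; field_simp; ring)
        rw [h, emb1_add, emb1_smul, emb1_smul]
        exact L.add_mem (L.smul_mem _ hv1) (L.smul_mem _ hw)
      · have h : (![0, 1] : Fin 2 → ℂ)
            = (-(w 0) / (v 0 * w 1 - v 1 * w 0)) • v + (v 0 / (v 0 * w 1 - v 1 * w 0)) • w := by
          funext i; fin_cases i <;>
            (simp [Pi.smul_apply, smul_eq_mul]; field_simp; ring)
        rw [h, emb1_add, emb1_smul, emb1_smul]
        exact L.add_mem (L.smul_mem _ hv1) (L.smul_mem _ hw)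
    by_cases hd : v 0 * (B.mulVec v) 1 - v 1 * (B.mulVec v) 0 = 0
    · by_cases hd' : v 0 * (Bᴴ.mulVec v) 1 - v 1 * (Bᴴ.mulVec v) 0 = 0
      · exfalso
        obtain ⟨l, hl⟩ := eigen_of_det v (B.mulVec v) hv0 hd
        obtain ⟨m, hm⟩ := eigen_of_det v (Bᴴ.mulVec v) hv0 hd'
        exact hB (key_not_normal B v hv0 l m hl hm)
      · exact hspan _ ((hmul2 _ (hmul1 _ hv1).1).2) hd'
    · exact hspan _ ((hmul2 _ (hmul1 _ hv1).2).1) hd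
  -- extract a nonzero vector from the hint
  rcases hint with h | h
  · obtain ⟨x, hxmem, hx0⟩ := (Submodule.ne_bot_iff _).mp h
    rw [Submodule.mem_inf] at hxmem
    obtain ⟨hxL, hxs⟩ := hxmem
    rw [Submodule.mem_span_pair] at hxs
    obtain ⟨c, d, hcd⟩ := hxs
    have hxe : x = emb1 ![c, d] := by
      rw [← hcd]; funext i; fin_cases i <;> simp [emb1, Pi.single_apply]
    have hv0 : (![c, d] : Fin 2 → ℂ) ≠ 0 := by
      intro hveq
      apply hx0
      rw [hxe, hveq]
      funext i; fin_cases i <;> simp [emb1]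
    exact hfin ![c, d] hv0 (hxe ▸ hxL)
  · obtain ⟨x, hxmem, hx0⟩ := (Submodule.ne_bot_iff _).mp h
    rw [Submodule.mem_inf] at hxmem
    obtain ⟨hxL, hxs⟩ := hxmem
    rw [Submodule.mem_span_pair] at hxs
    obtain ⟨c, d, hcd⟩ := hxs
    have hxe : x = emb2 ![c, d] := by
      rw [← hcd]; funext i; fin_cases i <;> simp [emb2, Pi.single_apply]
    have hv0 : (![c, d] : Fin 2 → ℂ) ≠ 0 := by
      intro hveq
      apply hx0
      rw [hxe, hveq]
      funext i; fin_cases i <;> simp [emb2]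
    exact hfin ![c, d] hv0 (hmul2 _ (hxe ▸ hxL)).1
end
end

section
/- Let u, v, ξ₁, η₁, ξ₂, η₂ ∈ ℝ and b ∈ ℝ; set α = u + iv, b₁ = ξ₁ + iη₁, b₂ = ξ₂ + iη₂, and define x = (1/4)(b² + |b₁|² + |b₂|² − 2) + (1/2)Re(α²) − (1/8)(b² + (η₁−η₂)²)/(1+v²), y = (1/2)(η₁+η₂) + (1/2)Im(α²), z = (1/4)(b² + |b₁|² + |b₂|² + 2) + (1/2)|α|² − (1/8)(b² + (η₁−η₂)²)/(1+v²). Then z = x + (1 + v²), and z² − x² − y² = (1+v²)(ξ₁² + ξ₂²)/2 + (1+2v²)b²/4 + (u − v(η₁+η₂)/2)² + v²(η₁−η₂)²/4. In particular, if b ≠ 0 then z² > x² + y². -/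
open Matrix

noncomputable section

theorem stmt17 (u v ξ₁ η₁ ξ₂ η₂ b : ℝ)
    (α : ℂ) (hα : α = (u : ℂ) + (v : ℂ) * Complex.I)
    (b₁ b₂ : ℂ) (hb₁ : b₁ = (ξ₁ : ℂ) + (η₁ : ℂ) * Complex.I)
    (hb₂ : b₂ = (ξ₂ : ℂ) + (η₂ : ℂ) * Complex.I)
    (x y z : ℝ)
    (hx : x = (1 / 4) * (b ^ 2 + ‖b₁‖ ^ 2 + ‖b₂‖ ^ 2 - 2)
        + (1 / 2) * (α ^ 2).re - (1 / 8) * ((b ^ 2 + (η₁ - η₂) ^ 2) / (1 + v ^ 2)))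
    (hy : y = (1 / 2) * (η₁ + η₂) + (1 / 2) * (α ^ 2).im)
    (hz : z = (1 / 4) * (b ^ 2 + ‖b₁‖ ^ 2 + ‖b₂‖ ^ 2 + 2)
        + (1 / 2) * ‖α‖ ^ 2 - (1 / 8) * ((b ^ 2 + (η₁ - η₂) ^ 2) / (1 + v ^ 2))) :
    z = x + (1 + v ^ 2) ∧
    z ^ 2 - x ^ 2 - y ^ 2
      = (1 + v ^ 2) * (ξ₁ ^ 2 + ξ₂ ^ 2) / 2 + (1 + 2 * v ^ 2) * b ^ 2 / 4
        + (u - v * (η₁ + η₂) / 2) ^ 2 + v ^ 2 * (η₁ - η₂) ^ 2 / 4 ∧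
    (b ≠ 0 → x ^ 2 + y ^ 2 < z ^ 2) := by
  have h1 : ‖b₁‖ ^ 2 = ξ₁ ^ 2 + η₁ ^ 2 := by
    rw [hb₁, Complex.sq_norm, Complex.normSq_apply]; simp; ring
  have h2 : ‖b₂‖ ^ 2 = ξ₂ ^ 2 + η₂ ^ 2 := by
    rw [hb₂, Complex.sq_norm, Complex.normSq_apply]; simp; ring
  have h3 : ‖α‖ ^ 2 = u ^ 2 + v ^ 2 := by
    rw [hα, Complex.sq_norm, Complex.normSq_apply]; simp; ring
  have h4 : (α ^ 2).re = u ^ 2 - v ^ 2 := by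
    rw [hα]; simp [pow_two, Complex.mul_re]
  have h5 : (α ^ 2).im = 2 * u * v := by
    rw [hα]; simp [pow_two, Complex.mul_im]; ring_nf
  rw [h1, h2, h4] at hx; rw [h1, h2, h3] at hz; rw [h5] at hy
  have hv : (0:ℝ) < 1 + v ^ 2 := by positivity
  have e1 : z = x + (1 + v ^ 2) := by rw [hx, hz]; ring
  have e2 : z ^ 2 - x ^ 2 - y ^ 2
      = (1 + v ^ 2) * (ξ₁ ^ 2 + ξ₂ ^ 2) / 2 + (1 + 2 * v ^ 2) * b ^ 2 / 4
        + (u - v * (η₁ + η₂) / 2) ^ 2 + v ^ 2 * (η₁ - η₂) ^ 2 / 4 := by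
    rw [hx, hy, hz]; field_simp; ring
  refine ⟨e1, e2, fun hb => ?_⟩
  have hb2 : 0 < b ^ 2 := by positivity
  nlinarith [sq_nonneg (u - v * (η₁ + η₂) / 2), sq_nonneg v, sq_nonneg ξ₁, sq_nonneg ξ₂, sq_nonneg (v * (η₁ - η₂)), mul_nonneg (sq_nonneg v) (sq_nonneg (η₁ - η₂))]
end
end

section
/- Let α ∈ ℂ, C, D ∈ M₂(ℂ), θ ∈ ℝ, and let A ∈ M₄(ℂ) be the block matrix [[αI₂, C],[D, −αI₂]]. Then there exists a real number c such that det(λ·I₄ − Im(e^{−iθ}A)) = (λ² − c)² for all λ ∈ ℂ (i.e., the Hermitian matrix Im(e^{−iθ}A) has its eigenvalues of the form ±λ₀ each with multiplicity 2) if and only if there exist r ≥ 0 and a unitary matrix U ∈ M₂(ℂ) such that e^{−iθ}C − e^{iθ}D* = r·U. -/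
open Matrix

noncomputable section

section auxstmt19

set_option maxHeartbeats 1600000

set_option maxRecDepth 10000

local notation "conj" => starRingEnd ℂ

private lemma aux_det4 (l b p q r s : ℂ) :
    (!![l-b, 0, -p, -q; 0, l-b, -r, -s; -(conj p), -(conj r), l+b, 0;
        -(conj q), -(conj s), 0, l+b]).det
    = (l^2-b^2)^2 - (p*conj p + q*conj q + r*conj r + s*conj s)*(l^2-b^2)
      + (p*s-q*r)*conj (p*s-q*r) := by
  simp [Matrix.det_succ_row_zero, Fin.sum_univ_succ, Matrix.det_fin_three,
    Fin.succAbove, Fin.castSucc, Fin.castAdd, Fin.castLE]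
  push_cast [map_sub, _root_.map_mul]
  ring

private lemma aux_det4E (l b k a₀ a₁ a₂ a₃ : ℂ) (hk : k * conj k = 1/4) :
    (!![l-b, 0, -(k*a₀), -(k*a₁); 0, l-b, -(k*a₂), -(k*a₃);
        -(conj k * conj a₀), -(conj k * conj a₂), l+b, 0;
        -(conj k * conj a₁), -(conj k * conj a₃), 0, l+b]).det
    = (l^2-b^2)^2
      - ((a₀*conj a₀ + a₁*conj a₁ + a₂*conj a₂ + a₃*conj a₃)/4)*(l^2-b^2)
      + ((a₀*a₃-a₁*a₂)*conj (a₀*a₃-a₁*a₂))/16 := by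
  have h := aux_det4 l b (k*a₀) (k*a₁) (k*a₂) (k*a₃)
  push_cast [map_sub, _root_.map_mul] at h
  rw [h]
  have hk2 : k^2 * (conj k)^2 = 1/16 := by linear_combination (k * conj k + 1/4) * hk
  push_cast [map_sub, _root_.map_mul]
  linear_combination (-(a₀*conj a₀ + a₁*conj a₁ + a₂*conj a₂ + a₃*conj a₃)*(l^2-b^2)) * hk
    + ((a₀*a₃-a₁*a₂)*(conj a₀*conj a₃ - conj a₁*conj a₂)) * hk2

private lemma aux_key2 (A : Matrix (Fin 2) (Fin 2) ℂ) :
    (((Complex.normSq (A 0 0) + Complex.normSq (A 0 1) + Complex.normSq (A 1 0)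
        + Complex.normSq (A 1 1) : ℝ) : ℂ))^2
      = 4 * ((A 0 0 * A 1 1 - A 0 1 * A 1 0) * conj (A 0 0 * A 1 1 - A 0 1 * A 1 0)) ↔
    ∃ r : ℝ, 0 ≤ r ∧ ∃ U : Matrix (Fin 2) (Fin 2) ℂ, U * Uᴴ = 1 ∧ A = (r : ℂ) • U := by
  constructor
  · intro h
    set a := A 0 0 with ha; set b := A 0 1 with hb; set c := A 1 0 with hc; set d := A 1 1 with hd
    rw [show ((Complex.normSq a + Complex.normSq b + Complex.normSq c + Complex.normSq d : ℝ) : ℂ)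
        = a * conj a + b * conj b + c * conj c + d * conj d by
      push_cast [← Complex.mul_conj]; ring] at h
    have hx : ((Complex.normSq a + Complex.normSq b - Complex.normSq c - Complex.normSq d : ℝ) : ℂ)^2
        + 4 * ((Complex.normSq (a * conj c + b * conj d) : ℝ) : ℂ) = 0 := by
      rw [show ((Complex.normSq (a * conj c + b * conj d) : ℝ) : ℂ)
          = (a * conj c + b * conj d) * conj (a * conj c + b * conj d) from (Complex.mul_conj _).symm]
      push_cast [← Complex.mul_conj, map_add, map_sub, _root_.map_mul, Complex.conj_conj] at h ⊢
      linear_combination h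
    have hx' : (Complex.normSq a + Complex.normSq b - Complex.normSq c - Complex.normSq d)^2
        + 4 * Complex.normSq (a * conj c + b * conj d) = 0 := by exact_mod_cast hx
    have h1 : Complex.normSq a + Complex.normSq b = Complex.normSq c + Complex.normSq d := by
      nlinarith [Complex.normSq_nonneg (a * conj c + b * conj d),
        sq_nonneg (Complex.normSq a + Complex.normSq b - Complex.normSq c - Complex.normSq d)]
    have h2 : a * conj c + b * conj d = 0 := by
      refine Complex.normSq_eq_zero.mp ?_
      nlinarith [sq_nonneg (Complex.normSq a + Complex.normSq b - Complex.normSq c - Complex.normSq d),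
        Complex.normSq_nonneg (a * conj c + b * conj d)]
    set T : ℝ := Complex.normSq a + Complex.normSq b + Complex.normSq c + Complex.normSq d with hT
    have hT0 : 0 ≤ T := by
      nlinarith [Complex.normSq_nonneg a, Complex.normSq_nonneg b, Complex.normSq_nonneg c,
        Complex.normSq_nonneg d]
    rcases eq_or_lt_of_le hT0 with hTz | hTp
    · refine ⟨0, le_refl 0, 1, by simp, ?_⟩
      have ea : a = 0 := by
        refine Complex.normSq_eq_zero.mp ?_
        nlinarith [Complex.normSq_nonneg a, Complex.normSq_nonneg b, Complex.normSq_nonneg c,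
          Complex.normSq_nonneg d]
      have eb : b = 0 := by
        refine Complex.normSq_eq_zero.mp ?_
        nlinarith [Complex.normSq_nonneg a, Complex.normSq_nonneg b, Complex.normSq_nonneg c,
          Complex.normSq_nonneg d]
      have ec : c = 0 := by
        refine Complex.normSq_eq_zero.mp ?_
        nlinarith [Complex.normSq_nonneg a, Complex.normSq_nonneg b, Complex.normSq_nonneg c,
          Complex.normSq_nonneg d]
      have ed : d = 0 := by
        refine Complex.normSq_eq_zero.mp ?_
        nlinarith [Complex.normSq_nonneg a, Complex.normSq_nonneg b, Complex.normSq_nonneg c,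
          Complex.normSq_nonneg d]
      ext i j
      fin_cases i <;> fin_cases j <;>
        simp [← ha, ← hb, ← hc, ← hd, ea, eb, ec, ed]
    · set r : ℝ := Real.sqrt (T / 2) with hrdef
      have hrpos : 0 < r := Real.sqrt_pos.mpr (by linarith)
      have hr2 : (r : ℝ)^2 = T / 2 := Real.sq_sqrt (by linarith)
      have hrne : (r : ℂ) ≠ 0 := by exact_mod_cast Complex.ofReal_ne_zero.mpr hrpos.ne'
      refine ⟨r, hrpos.le, ((r : ℂ))⁻¹ • A, ?_, ?_⟩
      · have hPQ : Complex.normSq a + Complex.normSq b = T / 2 := by rw [hT]; linarith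
        have hQ : Complex.normSq c + Complex.normSq d = T / 2 := by rw [hT]; linarith
        have h2' : c * conj a + d * conj b = 0 := by
          have := congrArg conj h2
          push_cast [map_add, _root_.map_mul, map_zero, Complex.conj_conj] at this
          linear_combination this
        ext i j
        fin_cases i <;> fin_cases j <;>
          (simp only [Matrix.mul_apply, Fin.sum_univ_two, Matrix.smul_apply,
              Matrix.conjTranspose_apply, Matrix.one_apply, smul_eq_mul, _root_.map_mul, map_inv₀,
              Complex.conj_ofReal, Complex.star_def, Fin.zero_eta, Fin.mk_one]
           field_simp)
        · have e : a * conj a + b * conj b = (r:ℂ)^2 := by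
            rw [Complex.mul_conj, Complex.mul_conj, ← Complex.ofReal_add, ← Complex.ofReal_pow, hr2, hPQ]
          rw [if_pos trivial, mul_one]; exact e
        · rw [if_neg (by decide), mul_zero]; exact h2
        · rw [if_neg (by decide), mul_zero]; exact h2'
        · have e : c * conj c + d * conj d = (r:ℂ)^2 := by
            rw [Complex.mul_conj, Complex.mul_conj, ← Complex.ofReal_add, ← Complex.ofReal_pow, hr2, hQ]
          rw [if_pos trivial, mul_one]; exact e
      · rw [smul_smul, mul_inv_cancel₀ hrne, one_smul]
  · rintro ⟨r, hr, U, hU, rfl⟩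
    have e00 := congrFun (congrFun hU 0) 0
    have e01 := congrFun (congrFun hU 0) 1
    have e10 := congrFun (congrFun hU 1) 0
    have e11 := congrFun (congrFun hU 1) 1
    simp [Matrix.mul_apply, Fin.sum_univ_two, Matrix.one_apply,
      Matrix.conjTranspose_apply] at e00 e01 e10 e11
    simp only [Matrix.smul_apply, smul_eq_mul]
    push_cast [← Complex.mul_conj, map_sub, _root_.map_mul, map_add, Complex.conj_conj,
      Complex.conj_ofReal]
    linear_combination ((r:ℂ)^4*((U 0 0 * conj (U 0 0) + U 0 1 * conj (U 0 1))
        - (U 1 0 * conj (U 1 0) + U 1 1 * conj (U 1 1))))*e00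
      - ((r:ℂ)^4*((U 0 0 * conj (U 0 0) + U 0 1 * conj (U 0 1))
        - (U 1 0 * conj (U 1 0) + U 1 1 * conj (U 1 1))))*e11
      + (4*(r:ℂ)^4*(U 0 0 * conj (U 1 0) + U 0 1 * conj (U 1 1)))*e10

private lemma aux_poly_iff (β t : ℝ) (Δ : ℂ) :
    (∃ c : ℝ, ∀ lam : ℂ, (lam^2-(β:ℂ)^2)^2 - ((t:ℂ)/4)*(lam^2-(β:ℂ)^2) + Δ/16
        = (lam^2-(c:ℂ))^2) ↔ (t:ℂ)^2 = 4*Δ := by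
  constructor
  · rintro ⟨c, hc⟩
    have h0 := hc β
    have h1 := hc (Real.sqrt (β^2+1))
    rw [show ((Real.sqrt (β^2+1) : ℝ) : ℂ)^2 = (β:ℂ)^2 + 1 by
      rw [show ((Real.sqrt (β^2+1) : ℝ) : ℂ)^2 = ((Real.sqrt (β^2+1)^2 : ℝ) : ℂ) by push_cast; ring,
        Real.sq_sqrt (by positivity)]; push_cast; ring] at h1
    linear_combination (4*((t:ℂ) - 8*((β:ℂ)^2-(c:ℂ))) - 64)*h0
      - 4*((t:ℂ)-8*((β:ℂ)^2-(c:ℂ)))*h1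
  · intro h
    refine ⟨β^2 + t/8, fun lam => ?_⟩
    push_cast
    linear_combination (-1/64 : ℂ) * h

private lemma aux_hM (e α : ℂ) (C D : Matrix (Fin 2) (Fin 2) ℂ) :
    Mim (e • blockA α C D) =
      !![(((e*α).im : ℝ) : ℂ), 0,
          (2*Complex.I)⁻¹ * (e * C 0 0 - conj e * conj (D 0 0)),
          (2*Complex.I)⁻¹ * (e * C 0 1 - conj e * conj (D 1 0));
         0, (((e*α).im : ℝ) : ℂ),
          (2*Complex.I)⁻¹ * (e * C 1 0 - conj e * conj (D 0 1)),
          (2*Complex.I)⁻¹ * (e * C 1 1 - conj e * conj (D 1 1));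
         conj ((2*Complex.I)⁻¹ * (e * C 0 0 - conj e * conj (D 0 0))),
         conj ((2*Complex.I)⁻¹ * (e * C 1 0 - conj e * conj (D 0 1))),
          -(((e*α).im : ℝ) : ℂ), 0;
         conj ((2*Complex.I)⁻¹ * (e * C 0 1 - conj e * conj (D 1 0))),
         conj ((2*Complex.I)⁻¹ * (e * C 1 1 - conj e * conj (D 1 1))),
          0, -(((e*α).im : ℝ) : ℂ)] := by
  have hd : ∀ z w : ℂ, -(Complex.I * 2⁻¹ * (z*w - conj z * conj w)) = ((z*w).im : ℂ) := by
    intro z w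
    rw [show conj z * conj w = conj (z*w) from (map_mul _ z w).symm, Complex.sub_conj]
    push_cast
    linear_combination (-((z*w).im : ℂ)) * Complex.I_sq
  ext i j
  fin_cases i <;> fin_cases j <;>
    simp [Mim, blockA, Matrix.conjTranspose_apply]
  all_goals try (norm_num [Complex.conj_ofNat]; ring)
  all_goals {
    have h := hd e α
    push_cast [Complex.mul_im] at h ⊢
    first
    | linear_combination h
    | linear_combination (-1 : ℂ) * h }

private lemma aux_main (e α : ℂ) (C D : Matrix (Fin 2) (Fin 2) ℂ) :
    (∃ c : ℝ, ∀ lam : ℂ,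
        (lam • (1 : Matrix (Fin 4) (Fin 4) ℂ) - Mim (e • blockA α C D)).det
          = (lam ^ 2 - (c : ℂ)) ^ 2) ↔
      ∃ r : ℝ, 0 ≤ r ∧ ∃ U : Matrix (Fin 2) (Fin 2) ℂ, U * Uᴴ = 1 ∧
        e • C - conj e • Dᴴ = (r : ℂ) • U := by
  have hk : (2*Complex.I)⁻¹ * conj ((2*Complex.I)⁻¹) = 1/4 := by
    rw [map_inv₀, ← mul_inv,
      show (2*Complex.I) * conj (2*Complex.I) = 4 by
        simp [Complex.conj_I, _root_.map_mul, Complex.conj_ofNat]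
        linear_combination (-4 : ℂ) * Complex.I_sq]
    norm_num
  set E : Matrix (Fin 2) (Fin 2) ℂ := e • C - conj e • Dᴴ with hE
  have hEapp : ∀ i j, E i j = e * C i j - conj e * conj (D j i) := by
    intro i j
    simp [hE, Matrix.conjTranspose_apply]
  set β : ℝ := (e*α).im with hβ
  set T : ℝ := Complex.normSq (E 0 0) + Complex.normSq (E 0 1) + Complex.normSq (E 1 0)
      + Complex.normSq (E 1 1) with hT
  set Δd : ℂ := (E 0 0 * E 1 1 - E 0 1 * E 1 0) * conj (E 0 0 * E 1 1 - E 0 1 * E 1 0) with hΔ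
  have hdet : ∀ lam : ℂ,
      (lam • (1 : Matrix (Fin 4) (Fin 4) ℂ) - Mim (e • blockA α C D)).det
        = (lam^2-(β:ℂ)^2)^2 - ((T:ℂ)/4)*(lam^2-(β:ℂ)^2) + Δd/16 := by
    intro lam
    rw [aux_hM e α C D]
    have hstep : lam • (1 : Matrix (Fin 4) (Fin 4) ℂ) -
        !![(((e*α).im : ℝ) : ℂ), 0,
            (2*Complex.I)⁻¹ * (e * C 0 0 - conj e * conj (D 0 0)),
            (2*Complex.I)⁻¹ * (e * C 0 1 - conj e * conj (D 1 0));
           0, (((e*α).im : ℝ) : ℂ),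
            (2*Complex.I)⁻¹ * (e * C 1 0 - conj e * conj (D 0 1)),
            (2*Complex.I)⁻¹ * (e * C 1 1 - conj e * conj (D 1 1));
           conj ((2*Complex.I)⁻¹ * (e * C 0 0 - conj e * conj (D 0 0))),
           conj ((2*Complex.I)⁻¹ * (e * C 1 0 - conj e * conj (D 0 1))),
            -(((e*α).im : ℝ) : ℂ), 0;
           conj ((2*Complex.I)⁻¹ * (e * C 0 1 - conj e * conj (D 1 0))),
           conj ((2*Complex.I)⁻¹ * (e * C 1 1 - conj e * conj (D 1 1))),
            0, -(((e*α).im : ℝ) : ℂ)]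
      = !![lam-(β:ℂ), 0, -((2*Complex.I)⁻¹*(E 0 0)), -((2*Complex.I)⁻¹*(E 0 1));
           0, lam-(β:ℂ), -((2*Complex.I)⁻¹*(E 1 0)), -((2*Complex.I)⁻¹*(E 1 1));
           -(conj ((2*Complex.I)⁻¹) * conj (E 0 0)), -(conj ((2*Complex.I)⁻¹) * conj (E 1 0)),
             lam+(β:ℂ), 0;
           -(conj ((2*Complex.I)⁻¹) * conj (E 0 1)), -(conj ((2*Complex.I)⁻¹) * conj (E 1 1)),
             0, lam+(β:ℂ)] := by
      ext i j
      fin_cases i <;> fin_cases j <;>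
        simp [Matrix.one_apply, hEapp, hβ, map_sub, _root_.map_mul] <;>
        ring
    rw [hstep, aux_det4E lam (β:ℂ) ((2*Complex.I)⁻¹) (E 0 0) (E 0 1) (E 1 0) (E 1 1) hk]
    rw [hT, hΔ]
    push_cast [← Complex.mul_conj]
    ring
  constructor
  · rintro ⟨c, hc⟩
    have := (aux_poly_iff β T Δd).mp ⟨c, fun lam => by rw [← hdet lam]; exact hc lam⟩
    exact (aux_key2 E).mp (by rw [← hT, ← hΔ]; exact this)
  · intro hR
    have h2 := (aux_key2 E).mpr hR
    have ht : (T:ℂ)^2 = 4*Δd := by rw [← hT, ← hΔ] at h2; exact h2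
    obtain ⟨c, hc⟩ := (aux_poly_iff β T Δd).mpr ht
    exact ⟨c, fun lam => by rw [hdet lam]; exact hc lam⟩

end auxstmt19

theorem stmt19 (α : ℂ) (C D : Matrix (Fin 2) (Fin 2) ℂ) (θ : ℝ) :
    (∃ c : ℝ, ∀ lam : ℂ,
        (lam • (1 : Matrix (Fin 4) (Fin 4) ℂ)
            - Mim (Complex.exp (-(θ : ℂ) * Complex.I) • blockA α C D)).det
          = (lam ^ 2 - (c : ℂ)) ^ 2) ↔
      ∃ r : ℝ, 0 ≤ r ∧ ∃ U : Matrix (Fin 2) (Fin 2) ℂ, U * Uᴴ = 1 ∧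
        Complex.exp (-(θ : ℂ) * Complex.I) • C - Complex.exp ((θ : ℂ) * Complex.I) • Dᴴ
          = (r : ℂ) • U := by
  rw [show Complex.exp ((θ : ℂ) * Complex.I)
      = (starRingEnd ℂ) (Complex.exp (-(θ : ℂ) * Complex.I)) by
    rw [← Complex.exp_conj]
    congr 1
    simp [_root_.map_mul, Complex.conj_I, Complex.conj_ofReal]]
  exact aux_main _ α C D
end
end
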